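/- The number of weak compositions f of n into k parts such that a fixed set of i parts each equal exactly 1, and every other part is 0 or ≥ 2, equals Σ_{j=0}^{⌊(n−i)/2⌋} C(k−i, j)·C(n−i−j−1, j−1), where for j=0 the summand is 1 if n=i and 0 otherwise. -/

import Mathlib

open Finset

lemma aux_card_antidiagonalTuple (j m : ℕ) :
    (Finset.Nat.antidiagonalTuple j m).card = (j + m - 1).choose m := by
  have e : {f // f ∈ Finset.Nat.antidiagonalTuple j m} ≃ Sym (Fin j) m :=
    { toFun := fun f => ⟨∑ a, (f.1 a) • ({a} : Multiset (Fin j)), by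
        have h := (Finset.Nat.mem_antidiagonalTuple).1 f.2
        rw [Multiset.card_sum]
        simp [Multiset.card_nsmul, h]⟩
      invFun := fun s => ⟨fun a => s.1.count a, by
        rw [Finset.Nat.mem_antidiagonalTuple,
          ← Finset.sum_subset (Finset.subset_univ s.1.toFinset)
            (fun x _ hx => by simpa using hx),
          Multiset.toFinset_sum_count_eq, s.2]⟩
      left_inv := fun f => by
        ext a
        simp [Multiset.count_sum', Multiset.count_singleton, Finset.sum_ite_eq]
      right_inv := fun s => by
        ext1
        show (∑ a : Fin j, (Multiset.count a s.1) • ({a} : Multiset (Fin j))) = s.1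
        rw [← Finset.sum_subset (Finset.subset_univ s.1.toFinset)
            (fun x _ hx => by
              simp only [Multiset.mem_toFinset] at hx
              rw [Multiset.count_eq_zero_of_notMem hx, zero_nsmul]),
          Multiset.toFinset_sum_count_nsmul_eq] }
  rw [← Fintype.card_coe, Fintype.card_congr e, Sym.card_sym_eq_choose, Fintype.card_fin]

lemma aux_fiber_card (n k i : ℕ) (hkn : n < k) (hin : i < n) (S : Finset (Fin k)) (hS : S.card = i)
    (T : Finset (Fin k)) (hT : T ⊆ Sᶜ)
    (hcat : ∀ c m : ℕ, (Finset.Nat.antidiagonalTuple c m).card = (c + m - 1).choose m) :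
    ((Finset.Nat.antidiagonalTuple k n).filter
      (fun f => ((∀ s ∈ S, f s = 1) ∧ ∀ t : Fin k, t ∉ S → f t = 0 ∨ 2 ≤ f t) ∧
        Sᶜ.filter (fun t => f t ≠ 0) = T)).card
    = if 1 ≤ T.card ∧ 2 * T.card ≤ n - i then (n - i - T.card - 1).choose (T.card - 1) else 0 := by
  set c := T.card with hc
  clear_value c
  -- key facts about members of the fiber
  have key : ∀ f ∈ (Finset.Nat.antidiagonalTuple k n).filter
      (fun f => ((∀ s ∈ S, f s = 1) ∧ ∀ t : Fin k, t ∉ S → f t = 0 ∨ 2 ≤ f t) ∧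
        Sᶜ.filter (fun t => f t ≠ 0) = T),
      (∀ t ∈ T, 2 ≤ f t) ∧ (∀ t, t ∉ S → t ∉ T → f t = 0) ∧ i + ∑ t ∈ T, f t = n := by
    intro f hf
    rw [Finset.mem_filter, Finset.Nat.mem_antidiagonalTuple] at hf
    obtain ⟨hsum, ⟨h1, h2⟩, hφ⟩ := hf
    have hzero : ∀ t, t ∉ S → t ∉ T → f t = 0 := by
      intro t hts htT
      by_contra hne
      exact htT (hφ ▸ Finset.mem_filter.2 ⟨Finset.mem_compl.2 hts, hne⟩)
    have hge : ∀ t ∈ T, 2 ≤ f t := by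
      intro t ht
      have hts : t ∉ S := Finset.mem_compl.1 (hT ht)
      have hne : f t ≠ 0 := by
        have : t ∈ Sᶜ.filter (fun t => f t ≠ 0) := by rw [hφ]; exact ht
        exact (Finset.mem_filter.1 this).2
      rcases h2 t hts with h | h
      · exact absurd h hne
      · exact h
    refine ⟨hge, hzero, ?_⟩
    have hsplit : ∑ t ∈ S, f t + ∑ t ∈ Sᶜ, f t = n := by
      rw [Finset.sum_add_sum_compl, hsum]
    have hSsum : ∑ t ∈ S, f t = i := by
      rw [Finset.sum_congr rfl h1, Finset.sum_const, hS, smul_eq_mul, mul_one]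
    have hTsum : ∑ t ∈ T, f t = ∑ t ∈ Sᶜ, f t :=
      Finset.sum_subset hT (fun x hx hxT => hzero x (Finset.mem_compl.1 hx) hxT)
    omega
  by_cases hcond : 1 ≤ c ∧ 2 * c ≤ n - i
  · rw [if_pos hcond]
    obtain ⟨hc1, hc2⟩ := hcond
    have E : {x // x ∈ T} ≃ Fin c := T.equivFin.trans (finCongr hc.symm)
    have hcard : ((Finset.Nat.antidiagonalTuple k n).filter
        (fun f => ((∀ s ∈ S, f s = 1) ∧ ∀ t : Fin k, t ∉ S → f t = 0 ∨ 2 ≤ f t) ∧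
          Sᶜ.filter (fun t => f t ≠ 0) = T)).card
        = (Finset.Nat.antidiagonalTuple c (n - i - 2 * c)).card := by
      apply Finset.card_nbij' (fun f a => f ↑(E.symm a) - 2)
        (fun g t => if t ∈ S then 1 else if h : t ∈ T then g (E ⟨t, h⟩) + 2 else 0)
      · -- forward maps into target
        intro f hf
        obtain ⟨hge, hzero, hsum⟩ := key f hf
        simp only [Finset.mem_coe, Finset.Nat.mem_antidiagonalTuple]
        have h1 : ∑ a : Fin c, f ↑(E.symm a) = ∑ t ∈ T, f t := by
          rw [← Finset.sum_coe_sort T f]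
          exact Equiv.sum_comp E.symm (fun t => f ↑t)
        have hle : ∀ a : Fin c, a ∈ Finset.univ → 2 ≤ f ↑(E.symm a) := by
          intro a _
          exact hge _ (E.symm a).2
        rw [Finset.sum_tsub_distrib Finset.univ hle, h1, Finset.sum_const, Finset.card_univ,
          Fintype.card_fin, smul_eq_mul, mul_comm]
        omega
      · -- backward maps into fiber
        intro g hg
        rw [Finset.mem_coe, Finset.Nat.mem_antidiagonalTuple] at hg
        have hST : ∀ t ∈ T, t ∉ S := fun t ht => Finset.mem_compl.1 (hT ht)
        simp only [Finset.mem_coe]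
        rw [Finset.mem_filter, Finset.Nat.mem_antidiagonalTuple]
        refine ⟨?_, ⟨fun s hs => by simp [hs], fun t hts => ?_⟩, ?_⟩
        · rw [← Finset.sum_add_sum_compl S]
          have hSsum : ∑ t ∈ S, (if t ∈ S then 1 else if h : t ∈ T then g (E ⟨t, h⟩) + 2 else 0)
              = i := by
            rw [Finset.sum_congr rfl (fun t ht => if_pos ht), Finset.sum_const, hS,
              smul_eq_mul, mul_one]
          have hTsum : ∑ t ∈ Sᶜ, (if t ∈ S then 1 else if h : t ∈ T then g (E ⟨t, h⟩) + 2 else 0)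
              = ∑ t ∈ T, (if t ∈ S then 1 else if h : t ∈ T then g (E ⟨t, h⟩) + 2 else 0) := by
            refine (Finset.sum_subset hT ?_).symm
            intro x hx hxT
            rw [if_neg (Finset.mem_compl.1 hx), dif_neg hxT]
          have hTval : ∑ t ∈ T, (if t ∈ S then 1 else if h : t ∈ T then g (E ⟨t, h⟩) + 2 else 0)
              = ∑ x : T, (g (E x) + 2) := by
            rw [← Finset.sum_coe_sort T]
            refine Finset.sum_congr rfl (fun x _ => ?_)
            rw [if_neg (hST _ x.2), dif_pos x.2]
          have hgsum : ∑ x : T, g (E x) = n - i - 2 * c := by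
            rw [Equiv.sum_comp E g, hg]
          rw [hSsum, hTsum, hTval, Finset.sum_add_distrib, hgsum, Finset.sum_const,
            Finset.card_univ, Fintype.card_coe, ← hc, smul_eq_mul]
          omega
        · by_cases ht : t ∈ T
          · right
            simp only [if_neg hts, dif_pos ht]
            omega
          · left
            simp only [if_neg hts, dif_neg ht]
        · ext x
          simp only [Finset.mem_filter, Finset.mem_compl]
          constructor
          · rintro ⟨hxs, hne⟩
            rw [if_neg hxs] at hne
            by_contra hxT
            rw [dif_neg hxT] at hne
            exact hne rfl
          · intro hxT
            refine ⟨hST _ hxT, ?_⟩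
            rw [if_neg (hST _ hxT), dif_pos hxT]
            omega
      · -- left inverse
        intro f hf
        obtain ⟨hge, hzero, _⟩ := key f hf
        funext t
        beta_reduce
        by_cases hs : t ∈ S
        · rw [if_pos hs]
          exact (((Finset.mem_filter.1 hf).2).1.1 t hs).symm
        · rw [if_neg hs]
          by_cases ht : t ∈ T
          · rw [dif_pos ht]
            have h2le := hge t ht
            simp only [Equiv.symm_apply_apply]
            omega
          · rw [dif_neg ht, hzero t hs ht]
      · -- right inverse
        intro g hg
        funext a
        have hmem : (↑(E.symm a) : Fin k) ∈ T := (E.symm a).2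
        have hns : (↑(E.symm a) : Fin k) ∉ S := Finset.mem_compl.1 (hT hmem)
        simp only [if_neg hns, dif_pos hmem, Subtype.coe_eta, Equiv.apply_symm_apply]
        omega
    rw [hcard, hcat]
    clear hcard key E
    have harith1 : c + (n - i - 2 * c) - 1 = n - i - c - 1 := by omega
    have harith2 : n - i - 2 * c = (n - i - c - 1) - (c - 1) := by omega
    have harith3 : c - 1 ≤ n - i - c - 1 := by omega
    rw [harith1, harith2, Nat.choose_symm harith3]
  · rw [if_neg hcond, Finset.card_eq_zero, Finset.eq_empty_iff_forall_notMem]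
    intro f hf
    obtain ⟨hge, _, hsum⟩ := key f hf
    have hbound : 2 * c ≤ ∑ t ∈ T, f t := by
      calc 2 * c = T.card • 2 := by rw [smul_eq_mul]; omega
      _ ≤ ∑ t ∈ T, f t := Finset.card_nsmul_le_sum T f 2 hge
    rcases Nat.eq_zero_or_pos c with h0 | h1
    · have hT0 : T = ∅ := Finset.card_eq_zero.1 (by omega)
      rw [hT0, Finset.sum_empty] at hsum
      omega
    · omega

/-- The number of weak compositions `f` of `n` into `k` parts such that a fixed
set `S` of `i` parts each equal exactly `1`, and every other part is `0` or
`≥ 2`, equals `∑_{j=0}^{⌊(n-i)/2⌋} C(k-i, j)·C(n-i-j-1, j-1)`, where the `j = 0`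
summand is `1` if `n = i` and `0` otherwise. -/
theorem count_compositions_fixed_singletons (n k i : ℕ) (hkn : n < k) (hin : i < n)
    (S : Finset (Fin k)) (hS : S.card = i) :
    ((Finset.Nat.antidiagonalTuple k n).filter
        (fun f => (∀ s ∈ S, f s = 1) ∧ ∀ t : Fin k, t ∉ S → f t = 0 ∨ 2 ≤ f t)).card
      = (if n = i then 1 else 0)
        + ∑ j ∈ Finset.Icc 1 ((n - i) / 2),
            (k - i).choose j * (n - i - j - 1).choose (j - 1) := by
  have hne : ¬ (n = i) := by omega
  rw [if_neg hne, zero_add]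
  rw [Finset.card_eq_sum_card_fiberwise
    (f := fun f => Sᶜ.filter (fun t => f t ≠ 0)) (t := Sᶜ.powerset)
    (fun (f : Fin k → ℕ) _ => Finset.mem_coe.2 (Finset.mem_powerset.2 (Finset.filter_subset _ _)))]
  have hfib : ∀ T ∈ Sᶜ.powerset,
      (((Finset.Nat.antidiagonalTuple k n).filter
        (fun f => (∀ s ∈ S, f s = 1) ∧ ∀ t : Fin k, t ∉ S → f t = 0 ∨ 2 ≤ f t)).filter
          (fun f => Sᶜ.filter (fun t => f t ≠ 0) = T)).card
      = if 1 ≤ T.card ∧ 2 * T.card ≤ n - i then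
          (n - i - T.card - 1).choose (T.card - 1) else 0 := by
    intro T hT
    rw [Finset.filter_filter]
    exact aux_fiber_card n k i hkn hin S hS T (Finset.mem_powerset.1 hT)
      aux_card_antidiagonalTuple
  rw [Finset.sum_congr rfl hfib, Finset.powerset_card_disjiUnion]
  erw [Finset.sum_disjiUnion]
  have hcompl : Sᶜ.card = k - i := by
    rw [Finset.card_compl, hS, Fintype.card_fin]
  have hinner : ∀ j ∈ Finset.range (Sᶜ.card + 1),
      (∑ T ∈ Finset.powersetCard j Sᶜ,
        if 1 ≤ T.card ∧ 2 * T.card ≤ n - i then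
          (n - i - T.card - 1).choose (T.card - 1) else 0)
      = if 1 ≤ j ∧ 2 * j ≤ n - i then
          (k - i).choose j * (n - i - j - 1).choose (j - 1) else 0 := by
    intro j _
    rw [Finset.sum_congr rfl (fun T hT => by rw [(Finset.mem_powersetCard.1 hT).2]),
      Finset.sum_const, Finset.card_powersetCard, hcompl, smul_eq_mul, mul_ite, mul_zero]
  rw [Finset.sum_congr rfl hinner, hcompl, ← Finset.sum_filter]
  congr 1
  ext a
  simp only [Finset.mem_filter, Finset.mem_range, Finset.mem_Icc, Nat.lt_succ_iff]
  rw [Nat.le_div_iff_mul_le (by norm_num : 0 < 2)]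
  omega
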